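/- Let X be a random variable with values in a measurable space 𝒳 and let φ : 𝒳 → ℝ^d be measurable with E[‖φ(X)‖] < ∞. Then there exist n ≤ d+1 points x₁,…,xₙ ∈ 𝒳 with φ(x₁),…,φ(xₙ) in the support of the law of φ(X), and positive weights w₁,…,wₙ, such that E[φ(X)] = Σᵢ wᵢ φ(xᵢ). -/

import Mathlib

open MeasureTheory

/-- The support of a measure on `ℝ^d`: the set of points all of whose open
neighborhoods have positive measure (equivalently, the smallest closed set of
full measure). -/
def measSupport {d : ℕ} (μ : Measure (Fin d → ℝ)) : Set (Fin d → ℝ) :=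
  {y | ∀ U : Set (Fin d → ℝ), IsOpen U → y ∈ U → μ U ≠ 0}


open Set Module Filter Topology

theorem sep_aux : ∀ (n : ℕ) {E : Type*} [NormedAddCommGroup E] [NormedSpace ℝ E]
    [FiniteDimensional ℝ E], finrank ℝ E ≤ n → ∀ {C : Set E}, Convex ℝ C →
    C.Nonempty → ∀ {b : E}, b ∈ closure C → b ∉ C →
    ∃ ℓ : E →L[ℝ] ℝ, (∀ y ∈ C, ℓ b ≤ ℓ y) ∧ ∃ y ∈ C, ℓ b < ℓ y := by
  intro n
  induction n with
  | zero =>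
    intro E _ _ _ hn C hC hne b hbcl hb
    have : Subsingleton E := finrank_zero_iff.mp (Nat.le_zero.mp hn)
    obtain ⟨c, hc⟩ := hne
    exact absurd (Subsingleton.elim b c ▸ hc) hb
  | succ n ih =>
    intro E _ _ _ hn C hC hne b hbcl hb
    by_cases hspan : affineSpan ℝ C = ⊤
    · -- full-dimensional case: the interior is nonempty, separate from it
      obtain ⟨a₀, ha₀⟩ := (hC.interior_nonempty_iff_affineSpan_eq_top).2 hspan
      obtain ⟨f, hf⟩ := geometric_hahn_banach_open_point hC.interior isOpen_interior
        (fun h => hb (interior_subset h))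
      refine ⟨-f, ?_, a₀, interior_subset ha₀, by simpa using hf a₀ ha₀⟩
      intro y hy
      simp only [ContinuousLinearMap.neg_apply, neg_le_neg_iff]
      -- show f y ≤ f b by approaching y from the interior
      have key : ∀ t ∈ Ioc (0:ℝ) 1, f (t • a₀ + (1 - t) • y) ≤ f b := by
        intro t ht
        exact (hf _ (hC.combo_interior_closure_mem_interior ha₀ (subset_closure hy)
          ht.1 (by linarith [ht.2]) (by ring))).le
      have tends : Tendsto (fun t : ℝ => f (t • a₀ + (1 - t) • y)) (𝓝[>] 0) (𝓝 (f y)) := by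
        have hcont : Continuous fun t : ℝ => f (t • a₀ + (1 - t) • y) := by fun_prop
      -- evaluate the limit at t = 0
        have h0 : Tendsto (fun t : ℝ => f (t • a₀ + (1 - t) • y)) (𝓝[>] 0)
            (𝓝 (f ((0:ℝ) • a₀ + ((1:ℝ) - 0) • y))) :=
          (hcont.tendsto 0).mono_left (nhdsWithin_le_nhds (s := Ioi (0:ℝ)))
        simpa using h0
      refine le_of_tendsto tends ?_
      filter_upwards [Ioc_mem_nhdsGT_of_mem (Set.mem_Ico.mpr ⟨le_refl 0, zero_lt_one⟩)] with t ht
      exact key t ht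
    · -- degenerate case: pass to the direction of the affine span and recurse
      set A := affineSpan ℝ C with hA
      have hAclosed : IsClosed (A : Set E) := A.closed_of_finiteDimensional
      have hbA : b ∈ A := closure_minimal (subset_affineSpan ℝ C) hAclosed hbcl
      set W := A.direction with hWdef
      have hAne : (A : Set E).Nonempty := ⟨hne.choose, subset_affineSpan ℝ C hne.choose_spec⟩
      have hWne : W ≠ ⊤ := fun h => hspan ((AffineSubspace.direction_eq_top_iff_of_nonempty hAne).mp h)
      have hWrank : finrank ℝ W ≤ n := by
        have h1 : finrank ℝ W < finrank ℝ E := Submodule.finrank_lt hWne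
        omega
      have hsubW : ∀ y ∈ C, -b + y ∈ W := by
        intro y hy
        have := AffineSubspace.vsub_mem_direction (subset_affineSpan ℝ C hy) hbA
        simpa [vsub_eq_sub, neg_add_eq_sub] using this
      set D₀ : Set E := (fun x => -b + x) '' C with hD₀
      have hD₀conv : Convex ℝ D₀ := hC.translate (-b)
      have hD₀W : D₀ ⊆ (W : Set E) := by
        rintro _ ⟨y, hy, rfl⟩; exact hsubW y hy
      set D : Set W := (W.subtype) ⁻¹' D₀ with hD
      have hDconv : Convex ℝ D := hD₀conv.linear_preimage W.subtype
      have himg : (Subtype.val : W → E) '' D = D₀ := by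
        apply Subset.antisymm
        · rintro _ ⟨w, hw, rfl⟩; exact hw
        · intro x hx; exact ⟨⟨x, hD₀W hx⟩, hx, rfl⟩
      have h0cl : (0 : W) ∈ closure D := by
        rw [Topology.IsEmbedding.subtypeVal.closure_eq_preimage_closure_image D, himg]
        have hsub : (fun x => -b + x) '' closure C ⊆ closure D₀ :=
          image_closure_subset_closure_image (by fun_prop)
        have hmem : -b + b ∈ (fun x => -b + x) '' closure C := ⟨b, hbcl, rfl⟩
        simpa using hsub hmem
      have h0D : (0 : W) ∉ D := by
        rintro ⟨y, hy, hy0⟩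
        have : y = b := by
          have : -b + y = (0 : E) := hy0
          linear_combination (norm := abel) this
        exact hb (this ▸ hy)
      have hDne : D.Nonempty := by
        obtain ⟨c, hc⟩ := hne
        exact ⟨⟨-b + c, hsubW c hc⟩, ⟨c, hc, rfl⟩⟩
      obtain ⟨ℓ', h1, y₀', hy₀'D, h2⟩ := ih hWrank hDconv hDne h0cl h0D
      obtain ⟨q, hq⟩ := W.exists_isCompl
      set ℓ : E →L[ℝ] ℝ :=
        LinearMap.toContinuousLinearMap (ℓ'.toLinearMap.comp (W.projectionOnto q hq)) with hℓ
      have hℓW : ∀ w : W, ℓ (w : E) = ℓ' w := by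
        intro w
        simp [hℓ, Submodule.projectionOnto_apply_left hq w]
      have hℓ0 : ℓ' 0 = 0 := map_zero ℓ'
      refine ⟨ℓ, ?_, b + (y₀' : E), ?_, ?_⟩
      · intro y hy
        have hmem : (⟨-b + y, hsubW y hy⟩ : W) ∈ D := by
          show -b + y ∈ D₀; exact ⟨y, hy, rfl⟩
        have := h1 _ hmem
        rw [hℓ0] at this
        have heq : ℓ y - ℓ b = ℓ' ⟨-b + y, hsubW y hy⟩ := by
          rw [← hℓW]
          simp only [map_add, map_neg]
          ring
        linarith [heq ▸ this]
      · obtain ⟨c, hc, hceq⟩ := hy₀'D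
        have hceq' : -b + c = (y₀' : E) := hceq
        have : c = b + (y₀' : E) := by rw [← hceq']; abel
        exact this ▸ hc
      · have := h2; rw [hℓ0] at this
        have heq : ℓ (b + (y₀' : E)) - ℓ b = ℓ' y₀' := by
          rw [← hℓW]; simp only [map_add]; ring
        linarith



lemma measSupport_isClosed {d : ℕ} (μ : Measure (Fin d → ℝ)) :
    IsClosed (measSupport μ) := by
  rw [← isOpen_compl_iff, isOpen_iff_forall_mem_open]
  intro y hy
  simp only [measSupport, mem_compl_iff, mem_setOf_eq, not_forall] at hy
  obtain ⟨U, hU, hyU, hμU⟩ := hy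
  rw [not_not] at hμU
  refine ⟨U, fun u hu hmem => ?_, hU, hyU⟩
  exact (hmem U hU hu) hμU

lemma measSupport_compl_null {d : ℕ} (μ : Measure (Fin d → ℝ)) :
    μ (measSupport μ)ᶜ = 0 := by
  set 𝒰 : Set (Set (Fin d → ℝ)) := {U | IsOpen U ∧ μ U = 0} with h𝒰
  obtain ⟨𝒯, h𝒯c, h𝒯𝒰, h𝒯U⟩ := TopologicalSpace.isOpen_sUnion_countable 𝒰 (fun U hU => hU.1)
  have hnull : μ (⋃₀ 𝒰) = 0 := by
    rw [← h𝒯U]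
    exact (measure_sUnion_null_iff h𝒯c).2 fun s hs => (h𝒯𝒰 hs).2
  refine measure_mono_null ?_ hnull
  intro y hy
  simp only [measSupport, mem_compl_iff, mem_setOf_eq, not_forall] at hy
  obtain ⟨U, hU, hyU, hμU⟩ := hy
  rw [not_not] at hμU
  exact ⟨U, ⟨hU, hμU⟩, hyU⟩


/-- Generalized Tchakaloff theorem: for a random variable `X` in a measurable space `𝒳`
and a measurable `φ : 𝒳 → ℝ^d` with `E‖φ(X)‖ < ∞`, there are `n ≤ d + 1` points whose
images under `φ` lie in the support of the law of `φ(X)` and positive weights realizing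
`E[φ(X)]` as a weighted sum. -/
theorem generalized_tchakaloff {d : ℕ} {𝒳 : Type*} [MeasurableSpace 𝒳]
    {Ω : Type*} [MeasurableSpace Ω] (P : Measure Ω) [IsProbabilityMeasure P]
    (X : Ω → 𝒳) (hX : Measurable X)
    (φ : 𝒳 → Fin d → ℝ) (hφ : Measurable φ)
    (hint : Integrable (fun ω => φ (X ω)) P) :
    ∃ (n : ℕ), n ≤ d + 1 ∧ ∃ (x : Fin n → 𝒳) (w : Fin n → ℝ),
      (∀ i, φ (x i) ∈ measSupport (P.map (fun ω => φ (X ω)))) ∧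
      (∀ i, 0 < w i) ∧
      (∫ ω, φ (X ω) ∂P) = ∑ i, w i • φ (x i) := by
  classical
  set f : Ω → (Fin d → ℝ) := fun ω => φ (X ω) with hfdef
  have hf : Measurable f := hφ.comp hX
  set μ : Measure (Fin d → ℝ) := P.map f with hμdef
  haveI : IsProbabilityMeasure μ := Measure.isProbabilityMeasure_map hf.aemeasurable
  set S := measSupport μ with hSdef
  have hSc : IsClosed S := measSupport_isClosed μ
  have hSnull : μ Sᶜ = 0 := measSupport_compl_null μ
  have hIntId : Integrable (id : (Fin d → ℝ) → (Fin d → ℝ)) μ :=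
    (integrable_map_measure aestronglyMeasurable_id hf.aemeasurable).2 (by exact hint)
  set b : Fin d → ℝ := ∫ y, y ∂μ with hbdef
  have hbP : ∫ ω, φ (X ω) ∂P = b := by
    rw [hbdef, hμdef]
    exact (integral_map hf.aemeasurable aestronglyMeasurable_id).symm
  set T : Set (Fin d → ℝ) := {y | (∃ x, φ x = y) ∧ y ∈ S} with hTdef
  have hTS : T ⊆ S := fun y hy => hy.2
  have hST : S ⊆ closure T := by
    intro y hy
    rw [mem_closure_iff]
    intro U hU hyU
    have h1 : μ U ≠ 0 := hy U hU hyU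
    have h2 : μ (U ∩ S) ≠ 0 := by
      intro hz
      apply h1
      have := measure_inter_add_diff U hSc.measurableSet (μ := μ)
      have hd : μ (U \ S) = 0 := measure_mono_null (diff_subset_compl U S) hSnull
      rw [← this, hz, hd, add_zero]
    have h3 : P (f ⁻¹' (U ∩ S)) ≠ 0 := by
      rwa [hμdef, Measure.map_apply hf (hU.measurableSet.inter hSc.measurableSet)] at h2
    obtain ⟨ω, hω⟩ := nonempty_of_measure_ne_zero h3
    exact ⟨f ω, hω.1, ⟨X ω, rfl⟩, hω.2⟩
  have hSne : S.Nonempty := by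
    rw [nonempty_iff_ne_empty]
    intro h
    have : μ Sᶜ = 1 := by rw [h, compl_empty, measure_univ]
    rw [hSnull] at this; exact zero_ne_one this
  have hTne : T.Nonempty := by
    rw [← closure_nonempty_iff]
    exact ⟨hSne.choose, hST hSne.choose_spec⟩
  have hae : ∀ᵐ y ∂μ, y ∈ S := by
    rw [Filter.eventually_iff, mem_ae_iff]
    simpa using hSnull
  have hSK : S ⊆ closure (convexHull ℝ T) :=
    hST.trans (closure_mono (subset_convexHull ℝ T))
  -- Step 1: b is in the closed convex hull of T
  have step1 : b ∈ closure (convexHull ℝ T) := by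
    by_contra h
    obtain ⟨g, u, hgb, hgt⟩ := geometric_hahn_banach_point_closed
      ((convex_convexHull ℝ T).closure) isClosed_closure h
    have hgint : g b = ∫ y, g y ∂μ := by
      have := g.integral_comp_comm hIntId
      simpa using this.symm
    have haeg : ∀ᵐ y ∂μ, u ≤ g y := hae.mono fun y hy => (hgt y (hSK hy)).le
    have hmono : u ≤ ∫ y, g y ∂μ := by
      have h1 : ∫ (_ : Fin d → ℝ), u ∂μ = u := by simp
      rw [← h1]
      exact integral_mono_ae (integrable_const u) (g.integrable_comp hIntId) haeg
    rw [← hgint] at hmono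
    linarith
  -- Step 2: b is in the convex hull of T
  have step2 : b ∈ convexHull ℝ T := by
    by_contra h
    obtain ⟨ℓ, h1, y₀, hy₀, h2⟩ := sep_aux (finrank ℝ (Fin d → ℝ)) (le_refl _)
      (convex_convexHull ℝ T) (hTne.mono (subset_convexHull ℝ T)) step1 h
    have hclo : ∀ y ∈ closure (convexHull ℝ T), ℓ b ≤ ℓ y := fun y hy =>
      closure_minimal (fun z hz => h1 z hz) (isClosed_le continuous_const ℓ.continuous) hy
    have haeineq : (0 : (Fin d → ℝ) → ℝ) ≤ᵐ[μ] fun y => ℓ y - ℓ b :=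
      hae.mono fun y hy => sub_nonneg.2 (hclo y (hSK hy))
    have hli : Integrable (fun y => ℓ y) μ := ℓ.integrable_comp hIntId
    have hInt : Integrable (fun y => ℓ y - ℓ b) μ := hli.sub (integrable_const _)
    have hℓint : ∫ y, ℓ y ∂μ = ℓ b := by
      have := ℓ.integral_comp_comm hIntId
      simpa using this
    have hzero : ∫ y, (ℓ y - ℓ b) ∂μ = 0 := by
      rw [integral_sub hli (integrable_const _), hℓint]
      simp
    have haez : (fun y => ℓ y - ℓ b) =ᵐ[μ] 0 :=
      (integral_eq_zero_iff_of_nonneg_ae haeineq hInt).1 hzero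
    set F : Set (Fin d → ℝ) := {y | ℓ y = ℓ b} with hFdef
    have hFnull : μ Fᶜ = 0 := by
      have h' : ∀ᵐ y ∂μ, y ∈ F := haez.mono fun y hy => by
        simp only [hFdef, mem_setOf_eq]
        have h0 : ℓ y - ℓ b = 0 := hy
        linarith
      rw [Filter.eventually_iff, mem_ae_iff] at h'
      simpa using h'
    have hSF : S ⊆ F := by
      intro y hy
      by_contra hyF
      exact (hy Fᶜ (isOpen_compl_iff.2 (isClosed_eq ℓ.continuous continuous_const)) hyF) hFnull
    have hconv : Convex ℝ F := by
      intro x hx y hy a c ha hc hac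
      simp only [hFdef, mem_setOf_eq] at hx hy ⊢
      rw [ℓ.map_add, ℓ.map_smul, ℓ.map_smul, hx, hy]
      simp only [smul_eq_mul]
      linear_combination (ℓ b) * hac
    have hTF : T ⊆ F := hTS.trans hSF
    have : y₀ ∈ F := convexHull_min hTF hconv hy₀
    have : ℓ y₀ = ℓ b := this
    linarith
  -- Caratheodory
  obtain ⟨ι, hι, z, w, hzT, hAI, hwpos, hwsum, hzsum⟩ :=
    eq_pos_convex_span_of_mem_convexHull step2
  letI : Fintype ι := hι
  set n := Fintype.card ι with hn
  have hcard : n ≤ d + 1 := by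
    have h1 := hAI.card_le_finrank_succ
    have h2 : finrank ℝ (vectorSpan ℝ (Set.range z)) ≤ finrank ℝ (Fin d → ℝ) :=
      Submodule.finrank_le _
    have h3 : finrank ℝ (Fin d → ℝ) = d := Module.finrank_fin_fun ℝ
    omega
  set e : Fin n ≃ ι := (Fintype.equivFin ι).symm with he
  have hmemT : ∀ i : Fin n, z (e i) ∈ T := fun i => hzT ⟨e i, rfl⟩
  set x : Fin n → 𝒳 := fun i => (hmemT i).1.choose with hx
  have hxφ : ∀ i, φ (x i) = z (e i) := fun i => (hmemT i).1.choose_spec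
  refine ⟨n, hcard, x, fun i => w (e i), ?_, fun i => hwpos (e i), ?_⟩
  · intro i
    rw [hxφ i]
    exact (hmemT i).2
  · rw [hbP, ← hzsum]
    rw [← Equiv.sum_comp e (fun j => w j • z j)]
    exact Finset.sum_congr rfl fun i _ => by rw [hxφ i]
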